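/- For every integer r ≥ 1, Σ_{j=1}^{r−1} j·C(j+r−1, j)/2^{j+r} = r·(1/2 − C(2r−1, r)/2^{2r−1}), where C(·,·) denotes the binomial coefficient and the empty sum (for r = 1) is zero. -/

import Mathlib

open Finset

private lemma choose_step (s : ℕ) :
    Nat.choose (2*s+3) (s+1) = 2 * Nat.choose (2*s+1) s + Nat.choose (2*s+2) s := by
  have h1 : Nat.choose (2*s+3) (s+1) = Nat.choose (2*s+2) s + Nat.choose (2*s+2) (s+1) := by
    rw [show 2*s+3 = (2*s+2)+1 by omega]
    exact Nat.choose_succ_succ _ _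
  have h2 : Nat.choose (2*s+2) (s+1) = Nat.choose (2*s+1) s + Nat.choose (2*s+1) (s+1) := by
    rw [show 2*s+2 = (2*s+1)+1 by omega]
    exact Nat.choose_succ_succ _ _
  have h3 : Nat.choose (2*s+1) (s+1) = Nat.choose (2*s+1) s := by
    have h := Nat.choose_symm (n := 2*s+1) (k := s+1) (by omega)
    rw [show (2*s+1) - (s+1) = s by omega] at h
    exact h.symm
  omega

private lemma key_sum (s : ℕ) :
    ∑ k ∈ Finset.range s, (Nat.choose (k + s + 1) k : ℝ) / 2 ^ k
      = 2 ^ (s+1) - 2 * (Nat.choose (2*s+1) s : ℝ) / 2 ^ s := by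
  induction s with
  | zero => simp
  | succ s ih =>
    have hidx : ∀ k : ℕ, k + (s+1) + 1 = k + s + 2 := fun k => by omega
    simp only [hidx]
    set A : ℝ := ∑ k ∈ Finset.range (s+1), (Nat.choose (k + s + 2) k : ℝ) / 2 ^ k with hA
    have hlast : ∑ k ∈ Finset.range (s+1), (Nat.choose (k + s + 2) k : ℝ) / 2 ^ k
        = (∑ k ∈ Finset.range s, (Nat.choose (k + s + 2) k : ℝ) / 2 ^ k)
          + (Nat.choose (2*s+2) s : ℝ) / 2 ^ s := by
      rw [Finset.sum_range_succ, show s + s + 2 = 2*s+2 by omega]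
    have hsplit : A = (∑ k ∈ Finset.range s, (Nat.choose (k + s + 2) k : ℝ) / 2 ^ (k+1))
        + ((∑ k ∈ Finset.range s, (Nat.choose (k + s + 1) k : ℝ) / 2 ^ k)
            + (Nat.choose (2*s+1) s : ℝ) / 2 ^ s) := by
      rw [hA, Finset.sum_range_succ' (fun k => (Nat.choose (k + s + 2) k : ℝ) / 2 ^ k) s]
      rw [show (∑ k ∈ Finset.range s, (Nat.choose (k + s + 1) k : ℝ) / 2 ^ k)
            + (Nat.choose (2*s+1) s : ℝ) / 2 ^ s
          = ∑ k ∈ Finset.range (s+1), (Nat.choose (k + s + 1) k : ℝ) / 2 ^ k by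
        rw [Finset.sum_range_succ, show s + s + 1 = 2*s+1 by omega]]
      rw [Finset.sum_range_succ' (fun k => (Nat.choose (k + s + 1) k : ℝ) / 2 ^ k) s]
      have hp : ∀ k ∈ Finset.range s,
          (Nat.choose (k + 1 + s + 2) (k+1) : ℝ) / 2 ^ (k+1)
          = (Nat.choose (k + s + 2) k : ℝ) / 2 ^ (k+1)
            + (Nat.choose (k + 1 + s + 1) (k+1) : ℝ) / 2 ^ (k+1) := by
        intro k _
        have : Nat.choose (k + 1 + s + 2) (k+1)
            = Nat.choose (k + s + 2) k + Nat.choose (k + s + 2) (k+1) := by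
          rw [show k + 1 + s + 2 = (k + s + 2) + 1 by omega]
          exact Nat.choose_succ_succ _ _
        rw [this, show k + 1 + s + 1 = (k + s + 2) by omega]
        push_cast
        ring
      rw [Finset.sum_congr rfl hp, Finset.sum_add_distrib]
      simp
      ring
    have hhalf : ∑ k ∈ Finset.range s, (Nat.choose (k + s + 2) k : ℝ) / 2 ^ (k+1)
        = (A - (Nat.choose (2*s+2) s : ℝ) / 2 ^ s) / 2 := by
      rw [hA, hlast]
      have hp2 : ∀ k ∈ Finset.range s,
          (Nat.choose (k + s + 2) k : ℝ) / 2 ^ (k+1)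
          = (Nat.choose (k + s + 2) k : ℝ) / 2 ^ k / 2 := by
        intro k _
        rw [pow_succ]; ring
      rw [Finset.sum_congr rfl hp2, ← Finset.sum_div]
      ring
    rw [hhalf, ih] at hsplit
    have hstep : (Nat.choose (2*(s+1)+1) (s+1) : ℝ)
        = 2 * (Nat.choose (2*s+1) s : ℝ) + (Nat.choose (2*s+2) s : ℝ) := by
      rw [show 2*(s+1)+1 = 2*s+3 by omega, choose_step]
      push_cast; ring
    rw [hstep]
    have h2 : (2:ℝ) ^ s ≠ 0 := by positivity
    have e1 : (2:ℝ)^(s+1) = 2 * 2^s := by ring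
    have e2 : (2:ℝ)^(s+1+1) = 4 * 2^s := by rw [pow_succ, e1]; ring
    have e3 : 2*(2*((Nat.choose (2*s+1) s : ℝ))+(Nat.choose (2*s+2) s : ℝ))/2^(s+1)
        = 2*((Nat.choose (2*s+1) s : ℝ)/2^s) + (Nat.choose (2*s+2) s : ℝ)/2^s := by
      rw [e1]; field_simp
    rw [e2, e3]
    rw [e1] at hsplit
    have hux : 2*((Nat.choose (2*s+1) s : ℝ))/2^s = 2*((Nat.choose (2*s+1) s : ℝ)/2^s) := by
      ring
    linarith [hux]

private lemma weight_eq (i s : ℕ) :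
    (i+1) * Nat.choose (i+s+1) (i+1) = (s+1) * Nat.choose (i+s+1) i := by
  have h1 := Nat.add_one_mul_choose_eq (i+s) i
  have h2 := Nat.add_one_mul_choose_eq (i+s) s
  have h3 : Nat.choose (i+s) i = Nat.choose (i+s) s := by
    have h := Nat.choose_symm (n := i+s) (k := s) (by omega)
    rw [show (i+s) - s = i by omega] at h
    exact h
  have h4 : Nat.choose (i+s+1) (s+1) = Nat.choose (i+s+1) i := by
    have h := Nat.choose_symm (n := i+s+1) (k := s+1) (by omega)
    rw [show (i+s+1) - (s+1) = i by omega] at h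
    exact h.symm
  calc (i+1) * Nat.choose (i+s+1) (i+1)
      = Nat.choose (i+s+1) (i+1) * (i+1) := by ring
    _ = (i+s).succ * Nat.choose (i+s) i := by rw [← h1]
    _ = (i+s).succ * Nat.choose (i+s) s := by rw [h3]
    _ = Nat.choose (i+s+1) (s+1) * (s+1) := by rw [h2]
    _ = (s+1) * Nat.choose (i+s+1) i := by rw [h4]; ring

theorem binomial_weighted_sum_identity (r : ℕ) (hr : 1 ≤ r) :
    ∑ j ∈ Finset.Icc 1 (r - 1), (j : ℝ) * (Nat.choose (j + r - 1) j : ℝ) / 2 ^ (j + r)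
      = (r : ℝ) * (1 / 2 - (Nat.choose (2 * r - 1) r : ℝ) / 2 ^ (2 * r - 1)) := by
  obtain ⟨s, rfl⟩ : ∃ s, r = s + 1 := ⟨r - 1, by omega⟩
  simp only [show s + 1 - 1 = s from rfl,
    show ∀ j : ℕ, j + (s+1) - 1 = j + s from fun j => by omega,
    show 2 * (s+1) - 1 = 2*s+1 by omega,
    show ∀ j : ℕ, j + (s+1) = j + s + 1 from fun j => by omega]
  rw [← Finset.Ico_add_one_right_eq_Icc, Finset.sum_Ico_eq_sum_range]
  simp only [show s + 1 - 1 = s from rfl, Nat.add_sub_cancel]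
  have hpt : ∀ i ∈ Finset.range s,
      ((1 + i : ℕ) : ℝ) * (Nat.choose (1 + i + s) (1 + i) : ℝ) / 2 ^ (1 + i + s + 1)
        = ((s : ℝ) + 1) / 2 ^ (s + 2) * ((Nat.choose (i + s + 1) i : ℝ) / 2 ^ i) := by
    intro i _
    have hw := weight_eq i s
    have hcast : ((i:ℝ)+1) * (Nat.choose (i+s+1) (i+1) : ℝ)
        = ((s:ℝ)+1) * (Nat.choose (i+s+1) i : ℝ) := by
      exact_mod_cast congrArg (Nat.cast (R := ℝ)) hw
    rw [show 1 + i + s = i + s + 1 by omega, show 1 + i = i + 1 by omega]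
    rw [show i + s + 1 + 1 = (s + 2) + i by omega, pow_add]
    push_cast
    have h1 : (2:ℝ) ^ (s+2) ≠ 0 := by positivity
    have h2 : (2:ℝ) ^ i ≠ 0 := by positivity
    field_simp
    linarith [hcast]
  rw [Finset.sum_congr rfl hpt, ← Finset.mul_sum, key_sum s]
  have h4 : (Nat.choose (2*s+1) (s+1) : ℝ) = (Nat.choose (2*s+1) s : ℝ) := by
    have h := Nat.choose_symm (n := 2*s+1) (k := s+1) (by omega)
    rw [show (2*s+1) - (s+1) = s by omega] at h
    exact_mod_cast congrArg (Nat.cast (R := ℝ)) h.symm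
  rw [h4, show 2*s+1 = s + (s+1) by omega, pow_add]
  have h1 : (2:ℝ) ^ (s+2) ≠ 0 := by positivity
  have h2 : (2:ℝ) ^ s ≠ 0 := by positivity
  have h3 : (2:ℝ) ^ (s+1) ≠ 0 := by positivity
  push_cast
  field_simp
  ring
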